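/- Let q = 2^m with m a positive integer. The map X ↦ X^{1+q} + X^{1+q^2} + X^{2q^2+2} is a permutation of F_{q^3} if and only if m is not congruent to 2 modulo 3. -/
import Mathlib

/-- `2^m % 7` only depends on `m % 3`. -/
lemma aux_two_pow_mod7 (m : ℕ) : 2^m % 7 = 2^(m % 3) % 7 := by
  conv_lhs => rw [← Nat.div_add_mod m 3]
  rw [pow_add, pow_mul, Nat.mul_mod, Nat.pow_mod]
  norm_num

/-- reduce exponents mod 7 for a 7-th root of unity -/
lemma aux_pow_mod7 {F : Type*} [Monoid F] {b : F} (hb : b^7 = 1) (n : ℕ) :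
    b^n = b^(n % 7) := by
  conv_lhs => rw [← Nat.div_add_mod n 7]
  rw [pow_add, pow_mul, hb, one_pow, one_mul]

/-- power maps with exponent coprime to `card - 1` are bijective on a finite field -/
lemma aux_pow_bijective {F : Type*} [Field F] [Fintype F] {n : ℕ} (hn : 0 < n)
    (h : Nat.Coprime n (Fintype.card F - 1)) :
    Function.Bijective (fun x : F => x ^ n) := by
  classical
  rw [← Finite.injective_iff_bijective]
  intro x y hxy
  simp only at hxy
  rcases eq_or_ne y 0 with rfl | hy
  · rw [zero_pow hn.ne'] at hxy
    exact pow_eq_zero_iff hn.ne' |>.mp hxy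
  rcases eq_or_ne x 0 with rfl | hx
  · rw [zero_pow hn.ne'] at hxy
    exact absurd ((pow_eq_zero_iff hn.ne').mp hxy.symm) hy
  · have hcop : (Nat.card Fˣ).Coprime n := by
      rw [Nat.card_eq_fintype_card, Fintype.card_units]
      exact h.symm
    have hu : powCoprime hcop (Units.mk0 x hx) = powCoprime hcop (Units.mk0 y hy) := by
      ext
      simpa [powCoprime_apply] using hxy
    have := (powCoprime hcop).injective hu
    exact congrArg Units.val this

theorem stmt_8 (m : ℕ) (hm : 0 < m) (F : Type*) [Field F] [Fintype F]
    (hF : Fintype.card F = (2^m)^3) :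
    Function.Bijective (fun x : F =>
      x^(1 + 2^m) + x^(1 + (2^m)^2) + x^(2*(2^m)^2 + 2)) ↔ m % 3 ≠ 2 := by
  classical
  -- characteristic 2
  obtain ⟨p, hp⟩ := CharP.exists F
  haveI := hp
  obtain ⟨n, hpp, hcard⟩ := FiniteField.card F p
  have hp2 : p = 2 := by
    have h1 : p ∣ (2^m)^3 := by
      rw [← hF, hcard]
      exact dvd_pow_self p n.2.ne'
    have h2 : p ∣ 2 := hpp.dvd_of_dvd_pow (hpp.dvd_of_dvd_pow h1)
    exact (Nat.prime_dvd_prime_iff_eq hpp Nat.prime_two).mp h2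
  subst hp2
  haveI : CharP F 2 := hp
  haveI : Fact (Nat.Prime 2) := ⟨Nat.prime_two⟩
  have h2z : (2 : F) = 0 := CharTwo.two_eq_zero
  -- the key additive map
  set h : F → F := fun b => b ^ 2^m + b + b^2 with hh
  -- frobenius facts
  have hx3 : ∀ y : F, y ^ ((2^m)^3) = y := by
    intro y
    rw [← hF]
    exact FiniteField.pow_card y
  have hfrob : ∀ x y : F, (x + y) ^ 2^m = x ^ 2^m + y ^ 2^m := by
    intro x y
    exact add_pow_char_pow x y 2 m
  have h0 : h 0 = 0 := by
    simp only [hh]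
    rw [zero_pow (by positivity), zero_pow (by norm_num)]
    ring
  -- the composition identity
  have hcomp : (fun x : F => x^(1 + 2^m) + x^(1 + (2^m)^2) + x^(2*(2^m)^2 + 2))
      = h ∘ (fun x : F => x ^ ((2^m)^2 + 1)) := by
    funext x
    simp only [hh, Function.comp_apply]
    have e1 : (x ^ ((2^m)^2 + 1)) ^ 2^m = x ^ (1 + 2^m) := by
      rw [← pow_mul x, show ((2^m)^2 + 1) * 2^m = (2^m)^3 + 2^m from by ring,
        pow_add x, hx3 x, pow_add x, pow_one]
    have e2 : x ^ (1 + (2^m)^2) = x ^ ((2^m)^2 + 1) := by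
      rw [Nat.add_comm 1 ((2^m)^2)]
    have e3 : (x ^ ((2^m)^2 + 1)) ^ 2 = x ^ (2*(2^m)^2 + 2) := by
      rw [← pow_mul x, show ((2^m)^2 + 1) * 2 = 2*(2^m)^2 + 2 from by ring]
    rw [e1, e3, e2]
  -- the power map is bijective
  have hcop : Nat.Coprime ((2^m)^2 + 1) (Fintype.card F - 1) := by
    rw [hF]
    have hle : (1 : ℕ) ≤ (2^m)^3 := Nat.one_le_pow _ _ (by positivity)
    apply Nat.isCoprime_iff_coprime.mp
    have hcast : (((2^m)^3 - 1 : ℕ) : ℤ) = ((2:ℤ)^m)^3 - 1 := by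
      rw [Nat.cast_sub hle]; push_cast; ring
    rw [hcast]
    have hqR : (2:ℤ)^m = 2 * 2^(m-1) := by
      rw [← pow_succ']; congr 1; omega
    push_cast
    refine ⟨4*(2^(m-1))^3 - 2*(2^(m-1))^2 + 2^(m-1),
      2^(m-1) - 2*(2^(m-1))^2 - 1, ?_⟩
    rw [hqR]; ring
  have hπ : Function.Bijective (fun x : F => x ^ ((2^m)^2 + 1)) :=
    aux_pow_bijective (by positivity) hcop
  rw [hcomp, Function.Bijective.of_comp_iff _ hπ]
  -- now: Bijective h ↔ m % 3 ≠ 2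
  constructor
  · -- if bijective then m % 3 ≠ 2
    intro hbij hm3
    -- get an element of order 7
    have h7 : (7 : ℕ) ∣ Fintype.card Fˣ := by
      rw [Fintype.card_units, hF]
      have h8 : (2^m)^3 = 8^m := by
        rw [← pow_mul, mul_comm, pow_mul]; norm_num
      rw [h8]
      have := Nat.sub_dvd_pow_sub_pow 8 1 m
      simpa using this
    haveI : Fact (Nat.Prime 7) := ⟨by norm_num⟩
    obtain ⟨ζ, hζ⟩ := exists_prime_orderOf_dvd_card 7 h7
    set c : F := (ζ : F) with hc
    have hc7 : c^7 = 1 := by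
      have : ζ^7 = 1 := by rw [← hζ]; exact pow_orderOf_eq_one ζ
      rw [hc, ← Units.val_pow_eq_pow_val, this, Units.val_one]
    have hc1 : c ≠ 1 := by
      intro hc1
      have : ζ = 1 := Units.ext hc1
      rw [this, orderOf_one] at hζ
      norm_num at hζ
    -- factor x^7 - 1
    have hfact : (c + 1) * ((c^3 + c + 1) * (c^3 + c^2 + 1)) = 0 := by
      linear_combination hc7 + (c^6 + c^5 + 2*c^4 + 2*c^3 + c^2 + c + 1) * h2z
    have hcne : c + 1 ≠ 0 := by
      intro hh0
      exact hc1 (by linear_combination hh0 - h2z)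
    -- obtain b with b^3 + b + 1 = 0
    obtain ⟨b, hb3⟩ : ∃ b : F, b^3 + b + 1 = 0 := by
      rcases mul_eq_zero.mp hfact with h0' | h0'
      · exact absurd h0' hcne
      rcases mul_eq_zero.mp h0' with h1 | h1
      · exact ⟨c, h1⟩
      · refine ⟨c^6, ?_⟩
        linear_combination (c^11 + c^4) * hc7 + (c^3 - c^2 - 1) * h1
          + (c^4 + c^2 + 1) * h2z
    have hbne : b ≠ 0 := by
      intro hb0
      rw [hb0] at hb3
      norm_num at hb3
    have hb7 : b^7 = 1 := by
      linear_combination (b^4 + b^2 + b + 1) * hb3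
        - (b^5 + b^4 + b^3 + b^2 + b + 1) * h2z
    -- h b = 0
    have hbq : b ^ 2^m = b^4 := by
      rw [aux_pow_mod7 hb7, aux_two_pow_mod7, hm3]
      norm_num
    have hhb : h b = 0 := by
      simp only [hh]
      rw [hbq]
      linear_combination b * hb3
    exact hbne (hbij.injective (hhb.trans h0.symm))
  · -- if m % 3 ≠ 2 then bijective
    intro hm3
    rw [← Finite.injective_iff_bijective]
    -- h is additive
    have hadd : ∀ x y : F, h (x + y) = h x + h y := by
      intro x y
      simp only [hh]
      rw [hfrob]
      linear_combination x * y * h2z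
    -- kernel is trivial
    have hker : ∀ b : F, h b = 0 → b = 0 := by
      intro b hb
      by_contra hbne
      simp only [hh] at hb
      have hbq : b ^ 2^m = b + b^2 := by
        linear_combination hb - (b + b^2) * h2z
      have hsq : ∀ k : ℕ, (b^k) ^ 2^m = (b ^ 2^m)^k := by
        intro k
        rw [← pow_mul, ← pow_mul, mul_comm]
      have hq2 : (b ^ 2^m) ^ 2^m = b + b^4 := by
        rw [hbq, hfrob, hsq 2, hbq]
        linear_combination (b^2 + b^3) * h2z
      have e3 : ((b ^ 2^m) ^ 2^m) ^ 2^m = b := by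
        have := hx3 b
        rw [show ((2:ℕ)^m)^3 = 2^m*2^m*2^m from by ring, pow_mul, pow_mul] at this
        exact this
      rw [hq2, hfrob, hsq 4, hbq] at e3
      -- e3 : (b + b^2) + ((b + b^2))^4 = b
      have hk : b^2 + b^4 + b^8 = 0 := by
        linear_combination e3 - (2*b^5 + 3*b^6 + 2*b^7) * h2z
      have hk2 : b + b^2 + b^4 = 0 := by
        have hsq0 : (b + b^2 + b^4)^2 = 0 := by
          linear_combination hk + (b^3 + b^5 + b^6) * h2z
        exact pow_eq_zero_iff (by norm_num) |>.mp hsq0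
      have hb3 : b^3 + b + 1 = 0 := by
        have hmul : b * (b^3 + b + 1) = 0 := by linear_combination hk2
        rcases mul_eq_zero.mp hmul with h0' | h0'
        · exact absurd h0' hbne
        · exact h0'
      have hb7 : b^7 = 1 := by
        linear_combination (b^4 + b^2 + b + 1) * hb3
          - (b^5 + b^4 + b^3 + b^2 + b + 1) * h2z
      have hbqm : b ^ 2^m = b ^ (2^(m % 3) % 7) := by
        rw [aux_pow_mod7 hb7, aux_two_pow_mod7]
      have h3 : m % 3 = 0 ∨ m % 3 = 1 ∨ m % 3 = 2 := by omega
      rcases h3 with hm' | hm' | hm'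
      · rw [hm'] at hbqm
        norm_num at hbqm
        rw [hbqm] at hbq
        have : b^2 = 0 := by linear_combination -hbq
        exact hbne (pow_eq_zero_iff (by norm_num) |>.mp this)
      · rw [hm'] at hbqm
        norm_num at hbqm
        rw [hbqm] at hbq
        have : b = 0 := by linear_combination -hbq
        exact hbne this
      · exact hm3 hm'
    intro x y hxy
    have hz : h (x + y) = 0 := by
      rw [hadd, hxy]
      linear_combination h y * h2z
    have hxy0 := hker _ hz
    linear_combination hxy0 - y * h2z
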